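/- arXiv:2306.08254 — 4 statements merged into one kernel-verified Lean document; each statement's English description precedes it below -/
import Mathlib

section
/- Let R > 0 and define 𝔏(R) := {z ∈ ℂ : max(|Re(1/z)|, |Im(1/z)|) = 1/(2R)} (for z ≠ 0). Then the distance between the sets 𝔏(R) and 𝔏(2R) equals (√5 − 1)·R. -/
private lemma aux_abs_eq {z : ℂ} {r : ℝ} (hr : 0 ≤ r) (h : Complex.normSq z = r^2) :
    ‖z‖ = r := by
  rw [Complex.norm_def, h, Real.sqrt_sq hr]

private lemma aux_cond {r : ℝ} (hr : 0 < r) {z : ℂ} (hz : z ≠ 0) :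
    max |(1 / z).re| |(1 / z).im| = 1 / (2 * r) ↔
      max |z.re| |z.im| * (2 * r) = z.re ^ 2 + z.im ^ 2 := by
  have hn : 0 < z.re ^ 2 + z.im ^ 2 := by
    have := Complex.normSq_pos.mpr hz
    rw [Complex.normSq_apply] at this; nlinarith
  have h1 : (1 / z).re = z.re / (z.re ^ 2 + z.im ^ 2) := by
    rw [one_div, Complex.inv_re, Complex.normSq_apply, sq, sq]
  have h2 : (1 / z).im = -z.im / (z.re ^ 2 + z.im ^ 2) := by
    rw [one_div, Complex.inv_im, Complex.normSq_apply, sq, sq]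
  rw [h1, h2, abs_div, abs_div, abs_neg, abs_of_pos hn,
    max_div_div_right hn.le, div_eq_div_iff hn.ne' (by positivity : (2:ℝ) * r ≠ 0)]
  rw [one_mul]

/-- every point of 𝔏(R) lies on one of four circles of radius R centered at ±R, ±iR -/
private lemma aux_near {R : ℝ} (hR : 0 < R) {z : ℂ}
    (h : max |z.re| |z.im| * (2 * R) = z.re ^ 2 + z.im ^ 2) :
    ∃ c : ℂ, (c.re = 0 ∨ c.im = 0) ∧ ‖c‖ = R ∧ ‖z - c‖ = R := by
  rcases max_cases |z.re| |z.im| with ⟨he, _⟩ | ⟨he, _⟩ <;> rw [he] at h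
  · rcases abs_cases z.re with ⟨hx, _⟩ | ⟨hx, _⟩ <;> rw [hx] at h
    · refine ⟨⟨R, 0⟩, Or.inr rfl, aux_abs_eq hR.le (by simp [Complex.normSq_mk]; ring),
        aux_abs_eq hR.le ?_⟩
      simp only [Complex.normSq_apply, Complex.sub_re, Complex.sub_im]
      nlinarith
    · refine ⟨⟨-R, 0⟩, Or.inr rfl, aux_abs_eq hR.le (by simp [Complex.normSq_mk]; ring),
        aux_abs_eq hR.le ?_⟩
      simp only [Complex.normSq_apply, Complex.sub_re, Complex.sub_im]
      nlinarith
  · rcases abs_cases z.im with ⟨hx, _⟩ | ⟨hx, _⟩ <;> rw [hx] at h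
    · refine ⟨⟨0, R⟩, Or.inl rfl, aux_abs_eq hR.le (by simp [Complex.normSq_mk]; ring),
        aux_abs_eq hR.le ?_⟩
      simp only [Complex.normSq_apply, Complex.sub_re, Complex.sub_im]
      nlinarith
    · refine ⟨⟨0, -R⟩, Or.inl rfl, aux_abs_eq hR.le (by simp [Complex.normSq_mk]; ring),
        aux_abs_eq hR.le ?_⟩
      simp only [Complex.normSq_apply, Complex.sub_re, Complex.sub_im]
      nlinarith

/-- every point of 𝔏(2R) is ≥ √5 R away from the four centers -/
private lemma aux_far {R : ℝ} (hR : 0 < R) {w c : ℂ} (hw : w ≠ 0)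
    (h : max |w.re| |w.im| * (2 * (2 * R)) = w.re ^ 2 + w.im ^ 2)
    (hc : c.re = 0 ∨ c.im = 0) (hcR : ‖c‖ = R) :
    Real.sqrt 5 * R ≤ ‖w - c‖ := by
  set M := max |w.re| |w.im| with hM
  have hMre : |w.re| ≤ M := le_max_left _ _
  have hMim : |w.im| ≤ M := le_max_right _ _
  have hn : 0 < w.re ^ 2 + w.im ^ 2 := by
    have := Complex.normSq_pos.mpr hw
    rw [Complex.normSq_apply] at this; nlinarith
  have hMpos : 0 < M := by nlinarith
  have h2M : w.re ^ 2 + w.im ^ 2 ≤ 2 * M ^ 2 := by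
    nlinarith [sq_abs w.re, sq_abs w.im, abs_nonneg w.re, abs_nonneg w.im]
  have hm8 : 8 * R ^ 2 ≤ w.re ^ 2 + w.im ^ 2 := by nlinarith
  have hcsq : c.re ^ 2 + c.im ^ 2 = R ^ 2 := by
    have := Complex.sq_norm c
    rw [hcR, Complex.normSq_apply] at this; nlinarith
  have hdot : w.re * c.re + w.im * c.im ≤ M * R := by
    rcases hc with h0 | h0
    · have him : |c.im| = R := by
        rw [← Real.sqrt_sq_eq_abs, (by nlinarith : c.im ^ 2 = R ^ 2), Real.sqrt_sq hR.le]
      calc w.re * c.re + w.im * c.im = w.im * c.im := by rw [h0]; ring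
        _ ≤ |w.im * c.im| := le_abs_self _
        _ = |w.im| * |c.im| := abs_mul _ _
        _ ≤ M * R := by rw [him]; exact mul_le_mul_of_nonneg_right hMim hR.le
    · have hre : |c.re| = R := by
        rw [← Real.sqrt_sq_eq_abs, (by nlinarith : c.re ^ 2 = R ^ 2), Real.sqrt_sq hR.le]
      calc w.re * c.re + w.im * c.im = w.re * c.re := by rw [h0]; ring
        _ ≤ |w.re * c.re| := le_abs_self _
        _ = |w.re| * |c.re| := abs_mul _ _
        _ ≤ M * R := by rw [hre]; exact mul_le_mul_of_nonneg_right hMre hR.le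
  have hkey : 5 * R ^ 2 ≤ Complex.normSq (w - c) := by
    simp only [Complex.normSq_apply, Complex.sub_re, Complex.sub_im]
    nlinarith
  calc Real.sqrt 5 * R = Real.sqrt (5 * R ^ 2) := by
        rw [Real.sqrt_mul (by norm_num), Real.sqrt_sq hR.le]
    _ ≤ Real.sqrt (Complex.normSq (w - c)) := Real.sqrt_le_sqrt hkey
    _ = ‖w - c‖ := (Complex.norm_def _).symm

/-- With `𝔏(R) = {z ≠ 0 : max (|Re (1/z)|) (|Im (1/z)|) = 1/(2R)}`, the distance
between `𝔏(R)` and `𝔏(2R)` equals `(√5 - 1) R`. -/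
theorem stmt7 (R : ℝ) (hR : 0 < R) :
    sInf (Set.image2 (fun a b : ℂ => ‖a - b‖)
        {z : ℂ | z ≠ 0 ∧ max |(1 / z).re| |(1 / z).im| = 1 / (2 * R)}
        {z : ℂ | z ≠ 0 ∧ max |(1 / z).re| |(1 / z).im| = 1 / (2 * (2 * R))}) =
      (Real.sqrt 5 - 1) * R := by
  set s := Real.sqrt 5 with hs
  have hs2 : s ^ 2 = 5 := Real.sq_sqrt (by norm_num)
  have hspos : 0 < s := Real.sqrt_pos.mpr (by norm_num)
  have hs_ge2 : 2 ≤ s := by nlinarith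
  have hR2 : 0 < 2 * R := by linarith
  -- lower bound
  have lb : ∀ d ∈ (Set.image2 (fun a b : ℂ => ‖a - b‖)
        {z : ℂ | z ≠ 0 ∧ max |(1 / z).re| |(1 / z).im| = 1 / (2 * R)}
        {z : ℂ | z ≠ 0 ∧ max |(1 / z).re| |(1 / z).im| = 1 / (2 * (2 * R))}),
      (s - 1) * R ≤ d := by
    rintro d hd
    rw [Set.mem_image2] at hd
    obtain ⟨z, hz, w, hw, rfl⟩ := hd
    obtain ⟨hz0, hzc⟩ := hz
    obtain ⟨hw0, hwc⟩ := hw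
    rw [aux_cond hR hz0] at hzc
    rw [aux_cond hR2 hw0] at hwc
    obtain ⟨c, hc, hcR, hzcR⟩ := aux_near hR hzc
    have hfar : s * R ≤ ‖w - c‖ := aux_far hR hw0 hwc hc hcR
    have htri : ‖w - c‖ ≤ ‖z - w‖ + ‖z - c‖ := by
      calc ‖w - c‖ = ‖(w - z) + (z - c)‖ := by ring_nf
        _ ≤ ‖w - z‖ + ‖z - c‖ := norm_add_le _ _
        _ = ‖z - w‖ + ‖z - c‖ := by
          rw [norm_sub_rev]
    show (s - 1) * R ≤ ‖z - w‖
    rw [hzcR] at htri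
    linarith
  -- the witness pair
  set z₀ : ℂ := ⟨R + R * s / 5, 2 * R * s / 5⟩ with hz₀
  set w₀ : ℂ := ⟨2 * R, 2 * R⟩ with hw₀
  have hz₀0 : z₀ ≠ 0 := by
    intro h
    have := congrArg Complex.re h
    simp only [hz₀, Complex.zero_re] at this
    nlinarith [mul_pos hR hspos]
  have hw₀0 : w₀ ≠ 0 := by
    intro h
    have := congrArg Complex.re h
    simp only [hw₀, Complex.zero_re] at this
    linarith
  have hsinv : R / s * s = R := div_mul_cancel₀ R hspos.ne'
  have hz₀mem : z₀ ≠ 0 ∧ max |(1 / z₀).re| |(1 / z₀).im| = 1 / (2 * R) := by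
    refine ⟨hz₀0, (aux_cond hR hz₀0).mpr ?_⟩
    have hre : z₀.re = R + R * s / 5 := rfl
    have him : z₀.im = 2 * R * s / 5 := rfl
    rw [hre, him, abs_of_pos (by nlinarith [mul_pos hR hspos]),
      abs_of_pos (by nlinarith [mul_pos hR hspos]),
      max_eq_left (by nlinarith [mul_pos hR hspos])]
    linear_combination (-(R ^ 2 / 5)) * hs2
  have hw₀mem : w₀ ≠ 0 ∧ max |(1 / w₀).re| |(1 / w₀).im| = 1 / (2 * (2 * R)) := by
    refine ⟨hw₀0, (aux_cond hR2 hw₀0).mpr ?_⟩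
    have hre : w₀.re = 2 * R := rfl
    have him : w₀.im = 2 * R := rfl
    rw [hre, him, abs_of_pos (by linarith), max_self]
    ring
  have hdist : ‖z₀ - w₀‖ = (s - 1) * R := by
    apply aux_abs_eq (by nlinarith)
    simp only [Complex.normSq_apply, Complex.sub_re, Complex.sub_im]
    show (R + R * s / 5 - 2 * R) * (R + R * s / 5 - 2 * R) +
        (2 * R * s / 5 - 2 * R) * (2 * R * s / 5 - 2 * R) = ((s - 1) * R) ^ 2
    linear_combination (-(4 * R ^ 2 / 5)) * hs2
  have hmem : (s - 1) * R ∈ (Set.image2 (fun a b : ℂ => ‖a - b‖)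
        {z : ℂ | z ≠ 0 ∧ max |(1 / z).re| |(1 / z).im| = 1 / (2 * R)}
        {z : ℂ | z ≠ 0 ∧ max |(1 / z).re| |(1 / z).im| = 1 / (2 * (2 * R))}) := by
    rw [Set.mem_image2]
    exact ⟨z₀, hz₀mem, w₀, hw₀mem, hdist⟩
  exact le_antisymm (csInf_le ⟨(s - 1) * R, lb⟩ hmem) (le_csInf ⟨_, hmem⟩ lb)
end

section
/- Let n ≥ 1, let a_1,…,a_n be Gaussian integers, let q_n, q_{n-1} be the corresponding continuants with |q_{n-1}/q_n| ≤ 1, and let Q(z) = (z·p_{n-1} + p_n)/(z·q_{n-1} + q_n) denote the associated Möbius map satisfying Q(α) − Q(β) = (−1)^n (α−β)/(q_n^2 (1 + (q_{n-1}/q_n)α)(1 + (q_{n-1}/q_n)β)). If α, β ∈ ℂ satisfy |α| ≤ 2R and |β| ≤ 4R with 0 < R < 1/4, then |α − β| / ((1+2R)(1+4R)|q_n|^2) ≤ |Q(α) − Q(β)| ≤ |α − β| / ((1−2R)(1−4R)|q_n|^2). -/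
/-- Distortion estimate for the Möbius map associated to continuants: if
`|q_{n-1}/q_n| ≤ 1` and `Q α - Q β = (-1)^n (α - β)/(q_n² (1 + (q_{n-1}/q_n)α)(1 + (q_{n-1}/q_n)β))`,
then for `|α| ≤ 2R`, `|β| ≤ 4R`, `0 < R < 1/4`,
`|α - β|/((1+2R)(1+4R)|q_n|²) ≤ |Q α - Q β| ≤ |α - β|/((1-2R)(1-4R)|q_n|²)`. -/
theorem stmt9 (n : ℕ) (hn : 1 ≤ n) (qn qn' : ℂ) (hqn : qn ≠ 0)
    (hratio : ‖qn' / qn‖ ≤ 1)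
    (Q : ℂ → ℂ)
    (hQ : ∀ α β : ℂ, Q α - Q β =
      (-1) ^ n * (α - β) / (qn ^ 2 * (1 + (qn' / qn) * α) * (1 + (qn' / qn) * β)))
    (R : ℝ) (hR0 : 0 < R) (hR : R < 1 / 4) (α β : ℂ)
    (hα : ‖α‖ ≤ 2 * R) (hβ : ‖β‖ ≤ 4 * R) :
    ‖α - β‖ / ((1 + 2 * R) * (1 + 4 * R) * (‖qn‖) ^ 2) ≤
        ‖Q α - Q β‖ ∧
      ‖Q α - Q β‖ ≤
        ‖α - β‖ / ((1 - 2 * R) * (1 - 4 * R) * (‖qn‖) ^ 2) := by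
  set r := qn' / qn with hr
  have hrα : ‖r * α‖ ≤ 2 * R := by
    rw [norm_mul]
    calc ‖r‖ * ‖α‖ ≤ 1 * ‖α‖ := by
          gcongr
      _ = ‖α‖ := one_mul _
      _ ≤ 2 * R := hα
  have hrβ : ‖r * β‖ ≤ 4 * R := by
    rw [norm_mul]
    calc ‖r‖ * ‖β‖ ≤ 1 * ‖β‖ := by
          gcongr
      _ = ‖β‖ := one_mul _
      _ ≤ 4 * R := hβ
  set A := ‖1 + r * α‖ with hA
  set B := ‖1 + r * β‖ with hB
  have hA_lower : 1 - 2 * R ≤ A := by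
    have h : (1:ℝ) ≤ A + ‖r * α‖ := by
      have := norm_add_le (1 + r * α) (-(r * α))
      simpa [hA] using this
    linarith
  have hA_upper : A ≤ 1 + 2 * R := by
    have := norm_add_le 1 (r * α)
    simp only [norm_one] at this
    linarith
  have hB_lower : 1 - 4 * R ≤ B := by
    have h : (1:ℝ) ≤ B + ‖r * β‖ := by
      have := norm_add_le (1 + r * β) (-(r * β))
      simpa [hB] using this
    linarith
  have hB_upper : B ≤ 1 + 4 * R := by
    have := norm_add_le 1 (r * β)
    simp only [norm_one] at this
    linarith
  have h2R : (0:ℝ) < 1 - 2 * R := by linarith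
  have h4R : (0:ℝ) < 1 - 4 * R := by linarith
  have hApos : 0 < A := lt_of_lt_of_le h2R hA_lower
  have hBpos : 0 < B := lt_of_lt_of_le h4R hB_lower
  have hqnpos : 0 < ‖qn‖ := norm_pos_iff.mpr hqn
  have key : ‖Q α - Q β‖ =
      ‖α - β‖ / ((‖qn‖) ^ 2 * A * B) := by
    rw [hQ α β, norm_div, norm_mul, norm_mul, norm_mul, norm_pow, norm_pow]
    simp [hA, hB]
  constructor
  · rw [key]
    apply div_le_div_of_nonneg_left (norm_nonneg _) (by positivity)
    calc (‖qn‖) ^ 2 * A * B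
        ≤ (‖qn‖) ^ 2 * (1 + 2 * R) * (1 + 4 * R) := by gcongr
      _ = (1 + 2 * R) * (1 + 4 * R) * (‖qn‖) ^ 2 := by ring
  · rw [key]
    apply div_le_div_of_nonneg_left (norm_nonneg _) (by positivity)
    calc (1 - 2 * R) * (1 - 4 * R) * (‖qn‖) ^ 2
        = (‖qn‖) ^ 2 * (1 - 2 * R) * (1 - 4 * R) := by ring
      _ ≤ (‖qn‖) ^ 2 * A * B := by gcongr
end

section
/- Fix β = 5√2 and for m, k ≥ 1 let Λ(m,k) := {(a_1,…,a_k) ∈ (ℤ[i]\{0,±1,±i})^k : ∏_{j=1}^k ‖a_j‖ ≤ m β^{k−1}}. Then for all m ≥ 2 and n ≥ 1, #Λ(m,n) ≤ m² · 8^n · β^{2(n−1)} · (1 + n log β + log m)^{n−1}. -/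
/-- `‖a‖ = max |Re a| |Im a|` for a Gaussian integer `a`, as a real number. -/
noncomputable def gnorm (a : GaussianInt) : ℝ := max |(a.re : ℝ)| |(a.im : ℝ)|

/-- Membership in `𝒟 = {a ∈ ℤ[i] : |a| ≥ √2}`. -/
noncomputable def inD (a : GaussianInt) : Prop :=
  Real.sqrt 2 ≤ Real.sqrt ((Zsqrtd.norm a : ℝ))

/-- `β = 5√2`. -/
noncomputable def beta : ℝ := 5 * Real.sqrt 2

/-- `Λ(m,k)`: words `(a₁,…,a_k) ∈ 𝒟^k` with `∏_j ‖a_j‖ ≤ m β^(k-1)`. -/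
def Lam (m k : ℕ) : Set (List GaussianInt) :=
  {l | l.length = k ∧ (∀ a ∈ l, inD a) ∧
    (l.map gnorm).prod ≤ (m : ℝ) * beta ^ (k - 1)}

/-! ### Auxiliary definitions and lemmas -/

/-- The integer version of `gnorm`. -/
def gnN (a : GaussianInt) : ℕ := max a.re.natAbs a.im.natAbs

lemma gnorm_eq (a : GaussianInt) : gnorm a = (gnN a : ℝ) := by
  unfold gnorm gnN
  push_cast [Nat.cast_natAbs]
  rfl

lemma inD_two_le {a : GaussianInt} (h : inD a) : (2 : ℤ) ≤ Zsqrtd.norm a := by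
  have h2 : (2 : ℝ) ≤ (Zsqrtd.norm a : ℝ) := by
    have hnn : (0 : ℝ) ≤ (Zsqrtd.norm a : ℝ) := by
      have := Zsqrtd.norm_nonneg (by norm_num) a
      exact_mod_cast this
    by_contra hc
    push_neg at hc
    have := Real.sqrt_lt_sqrt hnn hc
    exact absurd h (not_le.mpr this)
  exact_mod_cast h2

lemma one_le_gnN {a : GaussianInt} (h : inD a) : 1 ≤ gnN a := by
  have h2 := inD_two_le h
  rw [Zsqrtd.norm_def] at h2
  by_contra hc
  push_neg at hc
  interval_cases hg : gnN a
  unfold gnN at hg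
  have h1 : a.re = 0 := by omega
  have h3 : a.im = 0 := by omega
  rw [h1, h3] at h2
  norm_num at h2

lemma one_le_gnorm {a : GaussianInt} (h : inD a) : 1 ≤ gnorm a := by
  rw [gnorm_eq]
  exact_mod_cast one_le_gnN h

lemma inD_ne_zero {a : GaussianInt} (h : inD a) : a ≠ 0 := by
  intro h0
  have := one_le_gnN h
  rw [h0] at this
  simp [gnN] at this

lemma list_one_le_prod : ∀ {l : List ℝ}, (∀ x ∈ l, 1 ≤ x) → 1 ≤ l.prod := by
  intro l
  induction l with
  | nil => simp
  | cons a t ih =>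
    intro h
    rw [List.prod_cons]
    have ha : 1 ≤ a := h a (by simp)
    have ht : 1 ≤ t.prod := ih fun x hx => h x (List.mem_cons_of_mem a hx)
    nlinarith

lemma list_single_le_prod : ∀ {l : List ℝ}, (∀ x ∈ l, 1 ≤ x) →
    ∀ {x : ℝ}, x ∈ l → x ≤ l.prod := by
  intro l
  induction l with
  | nil => simp
  | cons a t ih =>
    intro h x hx
    rw [List.prod_cons]
    have ha : 1 ≤ a := h a (by simp)
    have ht : ∀ y ∈ t, 1 ≤ y := fun y hy => h y (List.mem_cons_of_mem a hy)
    have htp : 1 ≤ t.prod := list_one_le_prod ht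
    rcases List.mem_cons.mp hx with rfl | hx
    · nlinarith
    · have := ih ht hx
      have hx1 : 1 ≤ x := h x (List.mem_cons_of_mem a hx)
      nlinarith

lemma one_le_prod_gnorm {l : List GaussianInt} (h : ∀ a ∈ l, inD a) :
    1 ≤ (l.map gnorm).prod :=
  list_one_le_prod (by
    intro x hx
    obtain ⟨a, ha, rfl⟩ := List.mem_map.mp hx
    exact one_le_gnorm (h a ha))

lemma gnorm_le_prod {l : List GaussianInt} (h : ∀ a ∈ l, inD a)
    {a : GaussianInt} (ha : a ∈ l) : gnorm a ≤ (l.map gnorm).prod :=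
  list_single_le_prod (by
    intro x hx
    obtain ⟨b, hb, rfl⟩ := List.mem_map.mp hx
    exact one_le_gnorm (h b hb)) (List.mem_map_of_mem (f := gnorm) ha)

/-- Gaussian integers in the box `max |re| |im| ≤ n`. -/
noncomputable def box (n : ℕ) : Finset GaussianInt :=
  ((Finset.Icc (-(n : ℤ)) n) ×ˢ (Finset.Icc (-(n : ℤ)) n)).image fun p => ⟨p.1, p.2⟩

lemma mem_box {a : GaussianInt} {n : ℕ} : a ∈ box n ↔ gnN a ≤ n := by
  unfold box gnN
  simp only [Finset.mem_image, Finset.mem_product, Finset.mem_Icc, Prod.exists]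
  constructor
  · rintro ⟨x, y, ⟨⟨hx1, hx2⟩, hy1, hy2⟩, rfl⟩
    simp only
    omega
  · intro h
    exact ⟨a.re, a.im, ⟨⟨by omega, by omega⟩, by omega, by omega⟩, rfl⟩

lemma box_mono {m n : ℕ} (h : m ≤ n) : box m ⊆ box n := by
  intro a ha
  rw [mem_box] at *
  omega

lemma card_box (n : ℕ) : (box n).card = (2 * n + 1) ^ 2 := by
  unfold box
  rw [Finset.card_image_of_injective _ (by
    intro p q h
    exact Prod.ext (congrArg Zsqrtd.re h) (congrArg Zsqrtd.im h))]
  rw [Finset.card_product, Int.card_Icc]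
  have : ((n : ℤ) + 1 - -(n : ℤ)).toNat = 2 * n + 1 := by omega
  rw [this]
  ring

lemma card_shell (j : ℕ) (hj : 1 ≤ j) : (box j \ box (j - 1)).card = 8 * j := by
  obtain ⟨i, rfl⟩ := Nat.exists_eq_add_of_le hj
  rw [Finset.card_sdiff_of_subset (box_mono (by omega)), card_box, card_box]
  have h : (2 * (1 + i - 1) + 1) ^ 2 + 8 * (1 + i) = (2 * (1 + i) + 1) ^ 2 := by
    have : 1 + i - 1 = i := by omega
    rw [this]; ring
  omega

/-- Words of length `k` with all entries in `box n`. -/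
noncomputable def wordBox : ℕ → ℕ → Finset (List GaussianInt)
  | 0, _ => {[]}
  | k + 1, n => ((box n) ×ˢ wordBox k n).image fun p => p.1 :: p.2

lemma mem_wordBox : ∀ (k : ℕ) (n : ℕ) (l : List GaussianInt),
    l ∈ wordBox k n ↔ l.length = k ∧ ∀ a ∈ l, a ∈ box n := by
  intro k
  induction k with
  | zero =>
    intro n l
    simp only [wordBox, Finset.mem_singleton, List.length_eq_zero_iff]
    constructor
    · rintro rfl; simp
    · rintro ⟨rfl, -⟩; rfl
  | succ k ih =>
    intro n l
    simp only [wordBox, Finset.mem_image, Finset.mem_product, Prod.exists]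
    constructor
    · rintro ⟨a, t, ⟨ha, ht⟩, rfl⟩
      obtain ⟨hlen, hall⟩ := (ih n t).mp ht
      refine ⟨by simp [hlen], ?_⟩
      intro b hb
      rcases List.mem_cons.mp hb with rfl | hb
      · exact ha
      · exact hall b hb
    · rintro ⟨hlen, hall⟩
      cases l with
      | nil => simp at hlen
      | cons a t =>
        refine ⟨a, t, ⟨hall a (by simp), (ih n t).mpr ⟨by simpa using hlen, ?_⟩⟩, rfl⟩
        intro b hb
        exact hall b (List.mem_cons_of_mem a hb)

/-- The finite set of words of length `k` in `𝒟` with product of norms at most `T`. -/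
noncomputable def WF (k : ℕ) (T : ℝ) : Finset (List GaussianInt) :=
  @Finset.filter _ (fun l => (∀ a ∈ l, inD a) ∧ (l.map gnorm).prod ≤ T)
    (Classical.decPred _) (wordBox k ⌊T⌋₊)

lemma mem_WF {k : ℕ} {T : ℝ} {l : List GaussianInt} :
    l ∈ WF k T ↔ l ∈ wordBox k ⌊T⌋₊ ∧ (∀ a ∈ l, inD a) ∧ (l.map gnorm).prod ≤ T := by
  unfold WF
  exact @Finset.mem_filter _ _ (Classical.decPred _) _ _

/-- The words counted by `WF` form exactly the set of words in `𝒟` with bounded product. -/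
lemma set_eq_WF (k : ℕ) (T : ℝ) :
    {l : List GaussianInt | l.length = k ∧ (∀ a ∈ l, inD a) ∧ (l.map gnorm).prod ≤ T}
      = ↑(WF k T) := by
  ext l
  simp only [Set.mem_setOf_eq, Finset.coe_sort_coe, Finset.mem_coe, mem_WF, mem_wordBox]
  constructor
  · rintro ⟨hlen, hD, hp⟩
    refine ⟨⟨hlen, ?_⟩, hD, hp⟩
    intro a ha
    rw [mem_box]
    apply Nat.le_floor
    rw [← gnorm_eq]
    exact (gnorm_le_prod hD ha).trans hp
  · rintro ⟨⟨hlen, -⟩, hD, hp⟩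
    exact ⟨hlen, hD, hp⟩

lemma harmonic_sum_le {T : ℝ} (hT : 1 ≤ T) :
    ∑ j ∈ Finset.Icc 1 ⌊T⌋₊, ((j : ℝ))⁻¹ ≤ 1 + Real.log T := by
  have h := harmonic_floor_le_one_add_log T hT
  have he : (harmonic ⌊T⌋₊ : ℝ) = ∑ j ∈ Finset.Icc 1 ⌊T⌋₊, ((j : ℝ))⁻¹ := by
    rw [harmonic_eq_sum_Icc]
    push_cast
    rfl
  rw [← he]
  exact_mod_cast h

set_option maxHeartbeats 1000000 in
/-- The main counting estimate, by induction on the word length. -/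
lemma WF_card_le : ∀ k : ℕ, 1 ≤ k → ∀ T : ℝ, 1 ≤ T →
    ((WF k T).card : ℝ) ≤ 8 ^ k * T ^ 2 * (1 + Real.log T) ^ (k - 1) := by
  intro k hk
  induction k, hk using Nat.le_induction with
  | base =>
    intro T hT
    have hn : 1 ≤ ⌊T⌋₊ := (Nat.one_le_floor_iff T).mpr hT
    have hsub : WF 1 T ⊆ ((box ⌊T⌋₊).erase 0).image fun a => [a] := by
      intro l hl
      obtain ⟨hwb, hD, hp⟩ := mem_WF.mp hl
      obtain ⟨hlen, hall⟩ := (mem_wordBox 1 _ l).mp hwb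
      obtain ⟨a, rfl⟩ := List.length_eq_one_iff.mp hlen
      exact Finset.mem_image_of_mem (fun a => [a])
        (Finset.mem_erase.mpr ⟨inD_ne_zero (hD a (by simp)), hall a (by simp)⟩)
    have hcard : (WF 1 T).card ≤ (2 * ⌊T⌋₊ + 1) ^ 2 - 1 := by
      calc (WF 1 T).card ≤ (((box ⌊T⌋₊).erase 0).image fun a => [a]).card :=
            Finset.card_le_card hsub
        _ ≤ ((box ⌊T⌋₊).erase 0).card := Finset.card_image_le
        _ = (box ⌊T⌋₊).card - 1 :=
            Finset.card_erase_of_mem (mem_box.mpr (by simp [gnN]))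
        _ = (2 * ⌊T⌋₊ + 1) ^ 2 - 1 := by rw [card_box]
    have hfl : (⌊T⌋₊ : ℝ) ≤ T := Nat.floor_le (by linarith)
    have hfl1 : (1 : ℝ) ≤ (⌊T⌋₊ : ℝ) := by exact_mod_cast hn
    have hr : ((WF 1 T).card : ℝ) ≤ ((2 * ⌊T⌋₊ + 1) ^ 2 - 1 : ℕ) := by exact_mod_cast hcard
    have hcast : (((2 * ⌊T⌋₊ + 1) ^ 2 - 1 : ℕ) : ℝ) = (2 * (⌊T⌋₊ : ℝ) + 1) ^ 2 - 1 := by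
      have h1 : 1 ≤ (2 * ⌊T⌋₊ + 1) ^ 2 := by
        have : 0 < (2 * ⌊T⌋₊ + 1) ^ 2 := by positivity
        omega
      push_cast [Nat.cast_sub h1]
      ring
    rw [hcast] at hr
    simp only [pow_one, Nat.sub_self, pow_zero, mul_one]
    nlinarith [hr, hfl, hfl1]
  | succ k hk ih =>
    intro T hT
    set n := ⌊T⌋₊ with hn_def
    have hn : 1 ≤ n := (Nat.one_le_floor_iff T).mpr hT
    have hfl : (n : ℝ) ≤ T := Nat.floor_le (by linarith)
    have hT0 : (0 : ℝ) < T := by linarith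
    -- the covering by shells
    have hsub : WF (k + 1) T ⊆ (Finset.Icc 1 n).biUnion fun j =>
        ((box j \ box (j - 1)) ×ˢ WF k (T / j)).image fun p => p.1 :: p.2 := by
      intro l hl
      obtain ⟨hwb, hD, hp⟩ := mem_WF.mp hl
      obtain ⟨hlen, hall⟩ := (mem_wordBox (k + 1) _ l).mp hwb
      cases l with
      | nil => simp at hlen
      | cons a t =>
        have hDa : inD a := hD a (by simp)
        have hDt : ∀ b ∈ t, inD b := fun b hb => hD b (List.mem_cons_of_mem a hb)
        set j := gnN a with hj_def
        have hj1 : 1 ≤ j := one_le_gnN hDa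
        have hj0 : (0 : ℝ) < (j : ℝ) := by exact_mod_cast hj1
        have hprod : gnorm a * (t.map gnorm).prod ≤ T := by
          simpa [List.prod_cons] using hp
        have hprodt1 : 1 ≤ (t.map gnorm).prod := one_le_prod_gnorm hDt
        have hga : gnorm a = (j : ℝ) := gnorm_eq a
        have hjT : (j : ℝ) ≤ T := by
          calc (j : ℝ) = gnorm a := hga.symm
            _ ≤ gnorm a * (t.map gnorm).prod :=
                le_mul_of_one_le_right (by rw [hga]; positivity) hprodt1
            _ ≤ T := hprod
        have hjn : j ≤ n := Nat.le_floor hjT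
        have hprodt : (t.map gnorm).prod ≤ T / j := by
          rw [le_div_iff₀ hj0]
          calc (t.map gnorm).prod * (j : ℝ) = gnorm a * (t.map gnorm).prod := by
                rw [hga]; ring
            _ ≤ T := hprod
        have hTj1 : 1 ≤ T / (j : ℝ) := by
          rw [le_div_iff₀ hj0, one_mul]
          exact hjT
        have ha_mem : a ∈ box j \ box (j - 1) := by
          refine Finset.mem_sdiff.mpr ⟨mem_box.mpr le_rfl, ?_⟩
          rw [mem_box]
          omega
        have ht_mem : t ∈ WF k (T / j) := by
          rw [mem_WF]
          refine ⟨(mem_wordBox k _ t).mpr ⟨by simpa using hlen, ?_⟩, hDt, hprodt⟩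
          intro b hb
          rw [mem_box]
          apply Nat.le_floor
          rw [← gnorm_eq]
          exact (gnorm_le_prod hDt hb).trans hprodt
        refine Finset.mem_biUnion.mpr ⟨j, Finset.mem_Icc.mpr ⟨hj1, hjn⟩, ?_⟩
        rw [Finset.mem_image]
        exact ⟨(a, t), Finset.mem_product.mpr ⟨ha_mem, ht_mem⟩, rfl⟩
    -- cardinality bound as naturals
    have hcard : (WF (k + 1) T).card ≤
        ∑ j ∈ Finset.Icc 1 n, 8 * j * (WF k (T / j)).card := by
      calc (WF (k + 1) T).card
          ≤ ((Finset.Icc 1 n).biUnion fun j =>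
              ((box j \ box (j - 1)) ×ˢ WF k (T / j)).image fun p => p.1 :: p.2).card :=
            Finset.card_le_card hsub
        _ ≤ ∑ j ∈ Finset.Icc 1 n,
              (((box j \ box (j - 1)) ×ˢ WF k (T / j)).image fun p => p.1 :: p.2).card :=
            Finset.card_biUnion_le
        _ ≤ ∑ j ∈ Finset.Icc 1 n, 8 * j * (WF k (T / j)).card := by
            apply Finset.sum_le_sum
            intro j hj
            obtain ⟨hj1, -⟩ := Finset.mem_Icc.mp hj
            calc (((box j \ box (j - 1)) ×ˢ WF k (T / j)).image fun p => p.1 :: p.2).card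
                ≤ ((box j \ box (j - 1)) ×ˢ WF k (T / j)).card := Finset.card_image_le
              _ = (box j \ box (j - 1)).card * (WF k (T / j)).card := Finset.card_product _ _
              _ = 8 * j * (WF k (T / j)).card := by rw [card_shell j hj1]
    -- move to the reals
    have hlogT : 0 ≤ Real.log T := Real.log_nonneg hT
    have hr : ((WF (k + 1) T).card : ℝ) ≤
        ∑ j ∈ Finset.Icc 1 n, (8 * (j : ℝ)) * ((WF k (T / j)).card : ℝ) := by
      calc ((WF (k + 1) T).card : ℝ)
          ≤ ((∑ j ∈ Finset.Icc 1 n, 8 * j * (WF k (T / j)).card : ℕ) : ℝ) := by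
            exact_mod_cast hcard
        _ = ∑ j ∈ Finset.Icc 1 n, (8 * (j : ℝ)) * ((WF k (T / j)).card : ℝ) := by
            rw [Nat.cast_sum]
            refine Finset.sum_congr rfl fun j hj => ?_
            push_cast
            ring
    have hterm : ∀ j ∈ Finset.Icc 1 n,
        (8 * (j : ℝ)) * ((WF k (T / j)).card : ℝ) ≤
          8 ^ (k + 1) * T ^ 2 * (1 + Real.log T) ^ (k - 1) * ((j : ℝ))⁻¹ := by
      intro j hj
      obtain ⟨hj1, hjn⟩ := Finset.mem_Icc.mp hj
      have hj0 : (0 : ℝ) < (j : ℝ) := by exact_mod_cast hj1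
      have hjT : (j : ℝ) ≤ T := le_trans (by exact_mod_cast hjn : (j : ℝ) ≤ (n : ℝ)) hfl
      have hTj1 : 1 ≤ T / (j : ℝ) := by
        rw [le_div_iff₀ hj0, one_mul]; exact hjT
      have hIH := ih (T / j) hTj1
      have hlog1 : 0 ≤ Real.log (T / j) := Real.log_nonneg hTj1
      have hlog2 : Real.log (T / j) ≤ Real.log T :=
        Real.log_le_log (by linarith) (div_le_self (le_of_lt hT0) (by exact_mod_cast hj1))
      have hpowle : (1 + Real.log (T / j)) ^ (k - 1) ≤ (1 + Real.log T) ^ (k - 1) := by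
        apply pow_le_pow_left₀ (by linarith)
        linarith
      calc (8 * (j : ℝ)) * ((WF k (T / j)).card : ℝ)
          ≤ (8 * (j : ℝ)) * (8 ^ k * (T / j) ^ 2 * (1 + Real.log (T / j)) ^ (k - 1)) := by
            apply mul_le_mul_of_nonneg_left hIH (by positivity)
        _ = 8 ^ (k + 1) * T ^ 2 * (1 + Real.log (T / j)) ^ (k - 1) * ((j : ℝ))⁻¹ := by
            field_simp
            ring
        _ ≤ 8 ^ (k + 1) * T ^ 2 * (1 + Real.log T) ^ (k - 1) * ((j : ℝ))⁻¹ := by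
            apply mul_le_mul_of_nonneg_right _ (by positivity)
            apply mul_le_mul_of_nonneg_left hpowle (by positivity)
    have hsum : ((WF (k + 1) T).card : ℝ) ≤
        8 ^ (k + 1) * T ^ 2 * (1 + Real.log T) ^ (k - 1) *
          ∑ j ∈ Finset.Icc 1 n, ((j : ℝ))⁻¹ := by
      rw [Finset.mul_sum]
      exact hr.trans (Finset.sum_le_sum hterm)
    have hharm := harmonic_sum_le hT
    calc ((WF (k + 1) T).card : ℝ)
        ≤ 8 ^ (k + 1) * T ^ 2 * (1 + Real.log T) ^ (k - 1) *
            ∑ j ∈ Finset.Icc 1 n, ((j : ℝ))⁻¹ := hsum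
      _ ≤ 8 ^ (k + 1) * T ^ 2 * (1 + Real.log T) ^ (k - 1) * (1 + Real.log T) := by
          apply mul_le_mul_of_nonneg_left hharm (by positivity)
      _ = 8 ^ (k + 1) * T ^ 2 * (1 + Real.log T) ^ (k + 1 - 1) := by
          rw [mul_assoc, ← pow_succ]
          congr 2
          omega

lemma one_lt_beta : 1 < beta := by
  unfold beta
  nlinarith [Real.sq_sqrt (by norm_num : (0:ℝ) ≤ 2), Real.sqrt_nonneg 2]

/-- For `m ≥ 2` and `n ≥ 1`,
`#Λ(m,n) ≤ m² 8ⁿ β^{2(n-1)} (1 + n log β + log m)^{n-1}`. -/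
theorem stmt12 (m n : ℕ) (hm : 2 ≤ m) (hn : 1 ≤ n) :
    (Nat.card (Lam m n) : ℝ) ≤
      (m : ℝ) ^ 2 * 8 ^ n * beta ^ (2 * (n - 1)) *
        (1 + n * Real.log beta + Real.log m) ^ (n - 1) := by
  set T : ℝ := (m : ℝ) * beta ^ (n - 1) with hT_def
  have hb1 : (1 : ℝ) < beta := one_lt_beta
  have hb0 : (0 : ℝ) < beta := by linarith
  have hm1 : (1 : ℝ) ≤ (m : ℝ) := by exact_mod_cast hm.trans' (by norm_num)
  have hbp : (1 : ℝ) ≤ beta ^ (n - 1) := one_le_pow₀ hb1.le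

  have hT1 : 1 ≤ T := by
    calc (1 : ℝ) = 1 * 1 := by ring
      _ ≤ (m : ℝ) * beta ^ (n - 1) := by
          apply mul_le_mul hm1 hbp (by norm_num) (by linarith)
  have hset : Lam m n = ↑(WF n T) := set_eq_WF n T
  have hcard : (Nat.card (Lam m n) : ℝ) = ((WF n T).card : ℝ) := by
    rw [hset]
    rw [Nat.card_coe_set_eq, Set.ncard_coe_finset]
  rw [hcard]
  have hmain := WF_card_le n hn T hT1
  have hlogbeta : 0 ≤ Real.log beta := Real.log_nonneg (le_of_lt hb1)
  have hlogm : 0 ≤ Real.log (m : ℝ) := Real.log_nonneg hm1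
  have hlogT : Real.log T = Real.log (m : ℝ) + (n - 1 : ℕ) * Real.log beta := by
    rw [hT_def, Real.log_mul (by positivity) (by positivity), Real.log_pow]
  have hT2 : T ^ 2 = (m : ℝ) ^ 2 * beta ^ (2 * (n - 1)) := by
    rw [hT_def, mul_pow, mul_comm 2 (n - 1), pow_mul]
  have hbase : 1 + Real.log T ≤ 1 + (n : ℝ) * Real.log beta + Real.log (m : ℝ) := by
    rw [hlogT]
    have : ((n - 1 : ℕ) : ℝ) ≤ (n : ℝ) := by exact_mod_cast Nat.sub_le n 1
    nlinarith
  have hbase0 : 0 ≤ 1 + Real.log T := by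
    have : 0 ≤ Real.log T := Real.log_nonneg hT1
    linarith
  calc ((WF n T).card : ℝ)
      ≤ 8 ^ n * T ^ 2 * (1 + Real.log T) ^ (n - 1) := hmain
    _ = (m : ℝ) ^ 2 * 8 ^ n * beta ^ (2 * (n - 1)) * (1 + Real.log T) ^ (n - 1) := by
        rw [hT2]; ring
    _ ≤ (m : ℝ) ^ 2 * 8 ^ n * beta ^ (2 * (n - 1)) *
          (1 + (n : ℝ) * Real.log beta + Real.log (m : ℝ)) ^ (n - 1) := by
        apply mul_le_mul_of_nonneg_left _ (by positivity)
        exact pow_le_pow_left₀ hbase0 hbase _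
end

section
/- Let (s_n) be a sequence of reals in [0,2] such that s_{m+n} ≤ max(s_m, s_n) for all m, n ≥ 11, and suppose the limsup s̄ of (s_n) is not attained at infinitely many indices, i.e., only finitely many n satisfy s_n ≥ s̄. Then one derives a contradiction; hence s_n ≥ s̄ for infinitely many n. -/
/-- If `s : ℕ → ℝ` takes values in `[0,2]` and satisfies
`s (m+n) ≤ max (s m) (s n)` for all `m, n ≥ 11`, then the set of indices `n`
with `s n ≥ limsup s` is infinite. -/
theorem stmt17 (s : ℕ → ℝ) (hbd : ∀ n, s n ∈ Set.Icc (0 : ℝ) 2)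
    (hsub : ∀ m n, 11 ≤ m → 11 ≤ n → s (m + n) ≤ max (s m) (s n)) :
    {n : ℕ | Filter.limsup s Filter.atTop ≤ s n}.Infinite := by
  set L := Filter.limsup s Filter.atTop with hL
  by_contra h
  rw [Set.not_infinite] at h
  -- finite set of indices is bounded above
  obtain ⟨N₀, hN₀⟩ := h.bddAbove
  set N := max (N₀ + 1) 11 with hNdef
  have hN11 : 11 ≤ N := le_max_right _ _
  have hNpos : 0 < N := lt_of_lt_of_le (by norm_num) hN11
  have hlt : ∀ n, N ≤ n → s n < L := by
    intro n hn
    by_contra hc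
    push_neg at hc
    have : n ∈ {n : ℕ | L ≤ s n} := hc
    have h1 : n ≤ N₀ := hN₀ this
    have h2 : N₀ < N := lt_of_lt_of_le (Nat.lt_succ_self _) (le_max_left _ _)
    omega
  -- finite max over the window [N, 2N)
  have hne : ((Finset.Ico N (2 * N)).image s).Nonempty := by
    refine ⟨s N, Finset.mem_image_of_mem s ?_⟩
    simp [Finset.mem_Ico]
    omega
  set c := ((Finset.Ico N (2 * N)).image s).max' hne with hc
  have hmem : ∀ j ∈ Finset.Ico N (2 * N), s j ≤ c :=
    fun j hj => Finset.le_max' _ _ (Finset.mem_image_of_mem s hj)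
  -- c is attained at some j₀ ≥ N
  obtain ⟨j₀, hj₀, hj₀c⟩ := Finset.mem_image.mp (Finset.max'_mem _ hne)
  have hj₀N : N ≤ j₀ := (Finset.mem_Ico.mp hj₀).1
  have hcL : c < L := by rw [hc, ← hj₀c]; exact hlt j₀ hj₀N
  -- strong induction: all n ≥ N satisfy s n ≤ c
  have key : ∀ n, N ≤ n → s n ≤ c := by
    intro n
    induction n using Nat.strong_induction_on with
    | _ n ih =>
      intro hn
      by_cases h2 : n < 2 * N
      · exact hmem n (Finset.mem_Ico.mpr ⟨hn, h2⟩)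
      · push_neg at h2
        have hm : N ≤ n - N := by omega
        have heq : n = N + (n - N) := by omega
        have := hsub N (n - N) hN11 (le_trans hN11 hm)
        rw [← heq] at this
        have hih := ih (n - N) (by omega) hm
        have hNc : s N ≤ c := hmem N (Finset.mem_Ico.mpr ⟨le_refl N, by omega⟩)
        exact le_trans this (max_le hNc hih)
  -- limsup ≤ c
  have hbdd : Filter.IsBoundedUnder (· ≥ ·) Filter.atTop s :=
    Filter.isBoundedUnder_of ⟨0, fun n => (hbd n).1⟩
  have hcb : Filter.IsCoboundedUnder (· ≤ ·) Filter.atTop s :=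
    hbdd.isCoboundedUnder_le
  have hLc : L ≤ c := by
    apply Filter.limsup_le_of_le hcb
    filter_upwards [Filter.eventually_ge_atTop N] with n hn using key n hn
  exact absurd hLc (not_le.mpr hcL)
end
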